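/- Suppose (v*, z*) lies in the auxiliary feasible set Ξ' and maximizes Φ(M'(v,z)) over all (v,z) ∈ Ξ', where Φ : Matrix (Fin m) (Fin m) ℝ → ℝ is an arbitrary criterion function. Then the exact design w* := κ(v*, z*) maximizes Φ(M(w)) over the LAS-constrained set: w* ∈ Ξ_N(a,c,b) and Φ(M(w)) ≤ Φ(M(w*)) for every w ∈ Ξ_N(a,c,b). -/

import Mathlib

open Matrix

/-- Support indicator of an exact design. -/
def suppInd {n : ℕ} (w : Fin n → ℕ) : Fin n → ℕ := fun i => if 0 < w i then 1 else 0

/-- The LAS-constrained set of exact designs of size `N`. -/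
def XiLAS (n K N : ℕ) (a c : Fin n → Fin K → ℝ) (b : Fin K → ℝ) : Set (Fin n → ℕ) :=
  {w | (∀ k, (∑ i, a i k * (w i : ℝ)) + (∑ i, c i k * (suppInd w i : ℝ)) ≤ b k) ∧
       (∑ i, w i) = N}

/-- The auxiliary feasible set of auxiliary designs `(v, z)`. -/
def AuxFeas (n K N r : ℕ) (j₀ : Fin r) (a c : Fin n → Fin K → ℝ) (b : Fin K → ℝ) :
    Set ((Fin n × Fin r → ℕ) × (Fin n → ℕ)) :=
  {vz | (∀ i j, vz.1 (i, j) = vz.1 (i, j₀)) ∧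
        (∀ i, vz.2 i ≤ 1) ∧
        (∀ i, vz.2 i ≤ vz.1 (i, j₀) ∧ vz.1 (i, j₀) ≤ N * vz.2 i) ∧
        (∀ k, (∑ i, a i k * (vz.1 (i, j₀) : ℝ)) + (∑ i, c i k * (vz.2 i : ℝ)) ≤ b k) ∧
        (∑ i, vz.1 (i, j₀)) = N}

/-- The conversion map from auxiliary designs to exact designs. -/
def kappa {n r : ℕ} (j₀ : Fin r) (vz : (Fin n × Fin r → ℕ) × (Fin n → ℕ)) : Fin n → ℕ :=
  fun i => vz.1 (i, j₀)

/-- Elementary information matrix at design point `i`. -/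
def elemInfo {n r m : ℕ} (f : Fin n → Fin r → (Fin m → ℝ)) (i : Fin n) :
    Matrix (Fin m) (Fin m) ℝ :=
  ∑ j, vecMulVec (f i j) (f i j)

/-- Information matrix of an exact design `w`. -/
def infoMat {n r m : ℕ} (f : Fin n → Fin r → (Fin m → ℝ)) (w : Fin n → ℕ) :
    Matrix (Fin m) (Fin m) ℝ :=
  ∑ i, (w i : ℝ) • elemInfo f i

/-- Auxiliary information matrix of an auxiliary design `(v, z)`. -/
def auxInfoMat {n r m : ℕ} (f : Fin n → Fin r → (Fin m → ℝ))
    (vz : (Fin n × Fin r → ℕ) × (Fin n → ℕ)) : Matrix (Fin m) (Fin m) ℝ :=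
  ∑ i, ∑ j, (vz.1 (i, j) : ℝ) • vecMulVec (f i j) (f i j)

/-- If `(v*, z*)` is feasible for the auxiliary problem and maximizes the criterion
`Φ` of the auxiliary information matrix over the auxiliary feasible set, then
`κ(v*, z*)` is feasible for the LAS-constrained primary problem and maximizes
`Φ` of the information matrix over the LAS-constrained set. -/
theorem auxiliary_optimum_transfers (n K N r m : ℕ) (hr : 1 ≤ r) (j₀ : Fin r)
    (a c : Fin n → Fin K → ℝ) (b : Fin K → ℝ)
    (f : Fin n → Fin r → (Fin m → ℝ))
    (Φ : Matrix (Fin m) (Fin m) ℝ → ℝ)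
    (vz : (Fin n × Fin r → ℕ) × (Fin n → ℕ))
    (hfeas : vz ∈ AuxFeas n K N r j₀ a c b)
    (hopt : ∀ vz' ∈ AuxFeas n K N r j₀ a c b,
      Φ (auxInfoMat f vz') ≤ Φ (auxInfoMat f vz)) :
    kappa j₀ vz ∈ XiLAS n K N a c b ∧
      ∀ w ∈ XiLAS n K N a c b, Φ (infoMat f w) ≤ Φ (infoMat f (kappa j₀ vz)) := by
  obtain ⟨hconst, hz1, hzv, hlin, hsum⟩ := hfeas
  -- auxInfoMat of vz equals infoMat of kappa
  have key : ∀ (vz' : (Fin n × Fin r → ℕ) × (Fin n → ℕ)),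
      (∀ i j, vz'.1 (i, j) = vz'.1 (i, j₀)) →
      auxInfoMat f vz' = infoMat f (kappa j₀ vz') := by
    intro vz' h
    unfold auxInfoMat infoMat elemInfo kappa
    refine Finset.sum_congr rfl fun i _ => ?_
    rw [Finset.smul_sum]
    exact Finset.sum_congr rfl fun j _ => by rw [h i j]
  -- z = suppInd (kappa vz)
  have hzeq : ∀ i, vz.2 i = suppInd (kappa j₀ vz) i := by
    intro i
    have h1 := (hzv i).1
    have h2 := (hzv i).2
    have h3 := hz1 i
    unfold suppInd kappa
    by_cases h : 0 < vz.1 (i, j₀)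
    · rw [if_pos h]
      by_cases hz : vz.2 i = 0
      · rw [hz, Nat.mul_zero] at h2; omega
      · omega
    · rw [if_neg h]; omega
  have hfeasw : kappa j₀ vz ∈ XiLAS n K N a c b := by
    refine ⟨fun k => ?_, hsum⟩
    have := hlin k
    convert this using 2
    · rfl
    refine Finset.sum_congr rfl fun i _ => ?_
    rw [hzeq i]
  refine ⟨hfeasw, fun w hw => ?_⟩
  obtain ⟨hwlin, hwsum⟩ := hw
  -- build auxiliary design from w
  let vz' : (Fin n × Fin r → ℕ) × (Fin n → ℕ) := (fun p => w p.1, suppInd w)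
  have hwle : ∀ i, w i ≤ N := by
    intro i
    rw [← hwsum]
    exact Finset.single_le_sum (f := fun i => w i) (fun _ _ => Nat.zero_le _)
      (Finset.mem_univ i)
  have hfeas' : vz' ∈ AuxFeas n K N r j₀ a c b := by
    refine ⟨fun i j => rfl, fun i => ?_, fun i => ⟨?_, ?_⟩, fun k => ?_, hwsum⟩
    · show suppInd w i ≤ 1
      unfold suppInd; split <;> omega
    · show suppInd w i ≤ w i
      unfold suppInd; split <;> omega
    · show w i ≤ N * suppInd w i
      unfold suppInd
      split
      · simpa using hwle i
      · omega
    · exact hwlin k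
  have h1 := hopt vz' hfeas'
  rw [key vz' (fun i j => rfl), key vz hconst] at h1
  exact h1
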